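/- For n = 2k+1 teams (n ≥ 3), in any schedule with guaranteed rest time k-1, each team's rest between consecutive games it plays is either exactly k-1 or exactly k games, and each team sits out exactly one of the 2k+1 rounds of k consecutive games. -/

import Mathlib

/-- `f` lists the games of a single round-robin tournament on `n` teams:
positions `0, ..., N-1` are in bijection with the unordered pairs of distinct teams. -/
def isSchedule (n N : ℕ) (f : ℕ → Sym2 (Fin n)) : Prop :=
  (∀ i, i < N → ¬ (f i).IsDiag) ∧
  ∀ p : Sym2 (Fin n), ¬ p.IsDiag → ∃! i, i < N ∧ f i = p

/-- The schedule has guaranteed rest time at least `b`: any two games involving a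
common team `t` are separated by at least `b` games not involving `t`. -/
def hasRest (n N : ℕ) (f : ℕ → Sym2 (Fin n)) (b : ℕ) : Prop :=
  ∀ t : Fin n, ∀ i j, i < j → j < N → t ∈ f i → t ∈ f j →
    b ≤ ((Finset.Ioo i j).filter (fun l => t ∉ f l)).card

/-- Number of games played by team `t` in the first `m` games. -/
def played (n : ℕ) (f : ℕ → Sym2 (Fin n)) (t : Fin n) (m : ℕ) : ℕ :=
  ((Finset.range m).filter (fun i => t ∈ f i)).card

/-- The games-played difference index is at most `p`. -/
def gpLe (n N : ℕ) (f : ℕ → Sym2 (Fin n)) (p : ℕ) : Prop :=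
  ∀ m, m ≤ N → ∀ t1 t2 : Fin n, played n f t1 m ≤ played n f t2 m + p

/-- The rest of team `t` going into the game at position `i`: the number of games since
`t`'s previous game, where all teams play an imaginary game one slot before game `0`. -/
def rest (n : ℕ) (f : ℕ → Sym2 (Fin n)) (t : Fin n) (i : ℕ) : ℕ :=
  ((Finset.range i).filter (fun j => ∀ l, j ≤ l → l < i → t ∉ f l)).card

/-- The rest difference index is at most `d`. -/
def rdLe (n N : ℕ) (f : ℕ → Sym2 (Fin n)) (d : ℕ) : Prop :=
  ∀ i, i < N → ∀ t1 t2 : Fin n, t1 ∈ f i → t2 ∈ f i →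
    rest n f t1 i ≤ rest n f t2 i + d

/-- For `n = 2k+1` teams, in any schedule with guaranteed rest time `k-1`, each team's
rest between consecutive games it plays is exactly `k-1` or exactly `k` games, and each
team sits out exactly one of the `2k+1` rounds of `k` consecutive games. -/
theorem stmt18 (k : ℕ) (hk : 1 ≤ k) (f : ℕ → Sym2 (Fin (2*k+1)))
    (hf : isSchedule (2*k+1) ((2*k+1)*(2*k)/2) f)
    (hrest : hasRest (2*k+1) ((2*k+1)*(2*k)/2) f (k-1)) :
    (∀ t : Fin (2*k+1), ∀ i j, i < j → j < ((2*k+1)*(2*k)/2) → t ∈ f i → t ∈ f j →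
      (∀ l, i < l → l < j → t ∉ f l) → j - i - 1 = k - 1 ∨ j - i - 1 = k) ∧
    (∀ t : Fin (2*k+1), ∃! r, r < 2*k+1 ∧ ∀ l, r*k ≤ l → l < (r+1)*k → t ∉ f l) := by
  have hN : (2*k+1)*(2*k)/2 = (2*k+1)*k := by
    rw [show (2*k+1)*(2*k) = ((2*k+1)*k)*2 by ring, Nat.mul_div_cancel _ (by norm_num)]
  rw [hN] at hf hrest ⊢
  set N := (2*k+1)*k with hNdef
  obtain ⟨hnd, huniq⟩ := hf
  -- injectivity of the schedule on [0, N)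
  have hinj : ∀ i j, i < N → j < N → f i = f j → i = j := by
    intro i j hi hj hij
    obtain ⟨m, _, hu⟩ := huniq (f i) (hnd i hi)
    have h1 := hu i ⟨hi, rfl⟩
    have h2 := hu j ⟨hj, hij.symm⟩
    omega
  -- games of a common team are spaced at least k apart
  have hspace : ∀ t : Fin (2*k+1), ∀ i j, i < j → j < N → t ∈ f i → t ∈ f j →
      i + k ≤ j := by
    intro t i j hij hj hti htj
    have h1 := hrest t i j hij hj hti htj
    have h2 : ((Finset.Ioo i j).filter (fun l => t ∉ f l)).card ≤ (Finset.Ioo i j).card :=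
      Finset.card_filter_le _ _
    rw [Nat.card_Ioo] at h2
    omega
  -- each game involves exactly two teams
  have hcard2 : ∀ i, i < N →
      (Finset.univ.filter (fun u : Fin (2*k+1) => u ∈ f i)).card = 2 := by
    intro i hi
    obtain ⟨v, huv⟩ := Sym2.mem_iff_exists.mp (Sym2.out_fst_mem (f i))
    set u := (Quot.out (f i)).1 with hu
    have hne : u ≠ v := by
      intro h
      exact hnd i hi (by rw [huv, h]; exact Sym2.mk_isDiag_iff.mpr rfl)
    have hset : Finset.univ.filter (fun w : Fin (2*k+1) => w ∈ f i) = {u, v} := by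
      ext w
      simp [huv, Sym2.mem_iff]
    rw [hset, Finset.card_pair hne]
  -- each window of k consecutive games involves exactly 2k distinct teams
  have hwin : ∀ a, a + k ≤ N →
      ((Finset.Ico a (a+k)).biUnion
        (fun l => Finset.univ.filter (fun u : Fin (2*k+1) => u ∈ f l))).card = 2*k := by
    intro a ha
    rw [Finset.card_biUnion]
    · calc (∑ l ∈ Finset.Ico a (a+k),
            (Finset.univ.filter (fun u : Fin (2*k+1) => u ∈ f l)).card)
          = ∑ l ∈ Finset.Ico a (a+k), 2 := by
            refine Finset.sum_congr rfl (fun l hl => ?_)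
            rw [Finset.mem_Ico] at hl
            exact hcard2 l (by omega)
        _ = 2*k := by rw [Finset.sum_const, smul_eq_mul, Nat.card_Ico]; omega
    · intro x hx y hy hxy
      rw [Finset.mem_coe, Finset.mem_Ico] at hx hy
      rw [Function.onFun, Finset.disjoint_left]
      intro u hux huy
      rw [Finset.mem_filter] at hux huy
      rcases lt_trichotomy x y with h | h | h
      · have := hspace u x y h (by omega) hux.2 huy.2; omega
      · exact hxy h
      · have := hspace u y x h (by omega) huy.2 hux.2; omega
  -- if a team is absent from a full window, every other team plays in it
  have habsent : ∀ a, a + k ≤ N → ∀ t u : Fin (2*k+1), t ≠ u →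
      (∀ l, a ≤ l → l < a+k → t ∉ f l) → ∃ l, a ≤ l ∧ l < a + k ∧ u ∈ f l := by
    intro a ha t u htu htabs
    by_contra hcon
    push_neg at hcon
    set B := (Finset.Ico a (a+k)).biUnion
      (fun l => Finset.univ.filter (fun w : Fin (2*k+1) => w ∈ f l)) with hB
    have htB : t ∉ B := by
      intro hmem
      rw [hB, Finset.mem_biUnion] at hmem
      obtain ⟨l, hl, hw⟩ := hmem
      rw [Finset.mem_Ico] at hl
      rw [Finset.mem_filter] at hw
      exact htabs l hl.1 hl.2 hw.2
    have huB : u ∉ B := by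
      intro hmem
      rw [hB, Finset.mem_biUnion] at hmem
      obtain ⟨l, hl, hw⟩ := hmem
      rw [Finset.mem_Ico] at hl
      rw [Finset.mem_filter] at hw
      exact hcon l hl.1 hl.2 hw.2
    have hsub : ({t, u} : Finset (Fin (2*k+1))) ⊆ Finset.univ \ B := by
      intro w hw
      rw [Finset.mem_insert, Finset.mem_singleton] at hw
      rcases hw with rfl | rfl <;> simp [htB, huB]
    have h2 : ({t, u} : Finset (Fin (2*k+1))).card = 2 := Finset.card_pair htu
    have h3 : (Finset.univ \ B).card = 1 := by
      rw [Finset.card_sdiff_of_subset (Finset.subset_univ B), Finset.card_univ, Fintype.card_fin,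
        hwin a ha]
      omega
    have := Finset.card_le_card hsub
    omega
  -- each team plays exactly 2k games
  have hcount : ∀ t : Fin (2*k+1),
      ((Finset.range N).filter (fun i => t ∈ f i)).card = 2*k := by
    intro t
    have hbij : ((Finset.range N).filter (fun i => t ∈ f i)).card
        = (Finset.univ.erase t).card := by
      refine Finset.card_bij
        (fun i hi => Sym2.Mem.other ((Finset.mem_filter.mp hi).2)) ?_ ?_ ?_
      · intro i hi
        have h1 := Finset.mem_filter.mp hi
        have h2 : i < N := Finset.mem_range.mp h1.1
        exact Finset.mem_erase.mpr ⟨Sym2.other_ne (hnd i h2) h1.2, Finset.mem_univ _⟩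
      · intro i1 h1 i2 h2 heq
        have e1 := Sym2.other_spec ((Finset.mem_filter.mp h1).2)
        have e2 := Sym2.other_spec ((Finset.mem_filter.mp h2).2)
        refine hinj i1 i2 (Finset.mem_range.mp (Finset.mem_filter.mp h1).1)
          (Finset.mem_range.mp (Finset.mem_filter.mp h2).1) ?_
        rw [← e1, ← e2]
        exact Sym2.congr_right.mpr heq
      · intro u hu
        have hut : u ≠ t := (Finset.mem_erase.mp hu).1
        have hndp : ¬ (s(t, u) : Sym2 (Fin (2*k+1))).IsDiag := by
          rw [Sym2.mk_isDiag_iff]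
          exact fun h => hut h.symm
        obtain ⟨m, ⟨hmN, hmp⟩, _⟩ := huniq s(t, u) hndp
        have htm : t ∈ f m := by rw [hmp]; exact Sym2.mem_mk_left _ _
        have hmem : m ∈ (Finset.range N).filter (fun i => t ∈ f i) :=
          Finset.mem_filter.mpr ⟨Finset.mem_range.mpr hmN, htm⟩
        refine ⟨m, hmem, ?_⟩
        show Sym2.Mem.other ((Finset.mem_filter.mp hmem).2) = u
        exact Sym2.congr_right.mp ((Sym2.other_spec _).trans hmp)
    rw [hbij, Finset.card_erase_of_mem (Finset.mem_univ t), Finset.card_univ,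
      Fintype.card_fin]
    omega
  constructor
  · -- claim 1: gaps between consecutive games are k-1 or k
    intro t i j hij hjN hti htj hbet
    have hlow := hspace t i j hij hjN hti htj
    by_contra hcon
    push_neg at hcon
    have hbig : i + k + 2 ≤ j := by omega
    have hndi : ¬ (f (i+1)).IsDiag := hnd (i+1) (by omega)
    obtain ⟨v, huv⟩ := Sym2.mem_iff_exists.mp (Sym2.out_fst_mem (f (i+1)))
    set u := (Quot.out (f (i+1))).1 with hudef
    have hneuv : u ≠ v := fun h => hndi (by rw [huv, h]; exact Sym2.mk_isDiag_iff.mpr rfl)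
    have hu' : u ∈ f (i+1) := by rw [huv]; exact Sym2.mem_mk_left _ _
    have hv' : v ∈ f (i+1) := by rw [huv]; exact Sym2.mem_mk_right _ _
    have htne : t ∉ f (i+1) := hbet (i+1) (by omega) (by omega)
    have hut : t ≠ u := fun h => htne (h ▸ hu')
    have hvt : t ≠ v := fun h => htne (h ▸ hv')
    have habs : ∀ l, i+2 ≤ l → l < i+2+k → t ∉ f l :=
      fun l h1 h2 => hbet l (by omega) (by omega)
    obtain ⟨l, hl1, hl2, hul⟩ := habsent (i+2) (by omega) t u hut habs
    have hsp1 := hspace u (i+1) l (by omega) (by omega) hu' hul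
    have hleq : l = i+k+1 := by omega
    obtain ⟨l', hl'1, hl'2, hvl⟩ := habsent (i+2) (by omega) t v hvt habs
    have hsp2 := hspace v (i+1) l' (by omega) (by omega) hv' hvl
    have hl'eq : l' = i+k+1 := by omega
    have hfeq : f (i+k+1) = s(u, v) :=
      (Sym2.mem_and_mem_iff hneuv).mp ⟨hleq ▸ hul, hl'eq ▸ hvl⟩
    have : i+1 = i+k+1 := hinj (i+1) (i+k+1) (by omega) (by omega) (huv.trans hfeq.symm)
    omega
  · -- claim 2: each team misses exactly one round
    intro t
    set G := (Finset.range N).filter (fun i => t ∈ f i) with hG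
    have hGcard : G.card = 2*k := hcount t
    have hk0 : 0 < k := hk
    have hinjOn : Set.InjOn (fun i => i / k) ↑G := by
      intro i hi j hj hij
      simp only [hG, Finset.coe_filter, Set.mem_setOf_eq, Finset.mem_range] at hi hj
      have hij' : i / k = j / k := hij
      by_contra hne
      rcases lt_trichotomy i j with h | h | h
      · have hsp := hspace t i j h hj.1 hi.2 hj.2
        have hd : i/k + 1 ≤ j/k := by
          have h2 := Nat.div_le_div_right (c := k) hsp
          rwa [Nat.add_div_right _ hk0] at h2
        rw [hij'] at hd
        exact Nat.not_succ_le_self _ hd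
      · exact hne h
      · have hsp := hspace t j i h hi.1 hj.2 hi.2
        have hd : j/k + 1 ≤ i/k := by
          have h2 := Nat.div_le_div_right (c := k) hsp
          rwa [Nat.add_div_right _ hk0] at h2
        rw [hij'] at hd
        exact Nat.not_succ_le_self _ hd
    set S := G.image (fun i => i / k) with hS
    have hScard : S.card = 2*k := by
      rw [hS, Finset.card_image_of_injOn hinjOn, hGcard]
    have hSsub : S ⊆ Finset.range (2*k+1) := by
      intro r hr
      rw [hS, Finset.mem_image] at hr
      obtain ⟨i, hi, rfl⟩ := hr
      rw [hG, Finset.mem_filter, Finset.mem_range] at hi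
      rw [Finset.mem_range]
      refine (Nat.div_lt_iff_lt_mul hk0).mpr ?_
      rw [← hNdef]
      exact hi.1
    have hmemS : ∀ r, r < 2*k+1 →
        (r ∈ S ↔ ∃ l, r*k ≤ l ∧ l < (r+1)*k ∧ t ∈ f l) := by
      intro r hr
      constructor
      · intro hrS
        rw [hS, Finset.mem_image] at hrS
        obtain ⟨i, hi, rfl⟩ := hrS
        rw [hG, Finset.mem_filter, Finset.mem_range] at hi
        refine ⟨i, Nat.div_mul_le_self i k, ?_, hi.2⟩
        exact (Nat.div_lt_iff_lt_mul hk0).mp (Nat.lt_succ_self _)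
      · rintro ⟨l, h1, h2, h3⟩
        have hlN : l < N := by
          calc l < (r+1)*k := h2
            _ ≤ (2*k+1)*k := Nat.mul_le_mul_right _ (by omega)
            _ = N := hNdef.symm
        rw [hS, Finset.mem_image]
        exact ⟨l, by rw [hG, Finset.mem_filter, Finset.mem_range]; exact ⟨hlN, h3⟩,
          Nat.div_eq_of_lt_le h1 h2⟩
    have hTcard : (Finset.range (2*k+1) \ S).card = 1 := by
      rw [Finset.card_sdiff_of_subset hSsub, Finset.card_range, hScard]
      omega
    obtain ⟨r0, hr0⟩ := Finset.card_eq_one.mp hTcard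
    have hchar : ∀ r, (r < 2*k+1 ∧ ∀ l, r*k ≤ l → l < (r+1)*k → t ∉ f l) ↔
        r ∈ Finset.range (2*k+1) \ S := by
      intro r
      rw [Finset.mem_sdiff, Finset.mem_range]
      constructor
      · rintro ⟨h1, h2⟩
        refine ⟨h1, fun hrS => ?_⟩
        obtain ⟨l, hl1, hl2, hl3⟩ := (hmemS r h1).mp hrS
        exact h2 l hl1 hl2 hl3
      · rintro ⟨h1, h2⟩
        refine ⟨h1, fun l hl1 hl2 hl3 => h2 ((hmemS r h1).mpr ⟨l, hl1, hl2, hl3⟩)⟩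
    refine ⟨r0, ?_, ?_⟩
    · exact (hchar r0).mpr (by rw [hr0]; exact Finset.mem_singleton_self _)
    · intro r hr
      have := (hchar r).mp hr
      rw [hr0, Finset.mem_singleton] at this
      exact this
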